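/- Let z be a nonzero integer and let θ be a root of unity satisfying z²θ² + (2 − z²)θ + z² = 0. Then θ² + θ + 1 = 0, i.e., θ is a primitive third root of unity. -/
import Mathlib

theorem stmt_5 (z : ℤ) (hz : z ≠ 0) (θ : ℂ) (k : ℕ) (hk : 0 < k) (hroot : θ ^ k = 1)
    (heq : (z : ℂ) ^ 2 * θ ^ 2 + (2 - (z : ℂ) ^ 2) * θ + (z : ℂ) ^ 2 = 0) :
    θ ^ 2 + θ + 1 = 0 := by
  have hθ0 : θ ≠ 0 := by
    intro h
    rw [h, zero_pow hk.ne'] at hroot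
    exact zero_ne_one hroot
  have hzc : (z : ℂ) ≠ 0 := Int.cast_ne_zero.mpr hz
  have hz2 : (z : ℂ) ^ 2 ≠ 0 := pow_ne_zero _ hzc
  have hinv : θ ^ (k - 1) = θ⁻¹ := by
    have h1 : θ * θ ^ (k - 1) = 1 := by
      rw [← pow_succ', Nat.sub_add_cancel hk, hroot]
    exact eq_inv_of_mul_eq_one_right h1
  set s : ℂ := θ + θ ^ (k - 1) with hs
  have key : (z : ℂ) ^ 2 * s = (z : ℂ) ^ 2 - 2 := by
    have h2 : (z : ℂ) ^ 2 * s * θ = ((z : ℂ) ^ 2 - 2) * θ := by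
      have hθi : θ⁻¹ * θ = 1 := inv_mul_cancel₀ hθ0
      rw [hs, hinv]
      linear_combination heq + (z : ℂ) ^ 2 * hθi
    exact mul_right_cancel₀ hθ0 h2
  have hintθ : IsIntegral ℤ θ := by
    refine ⟨Polynomial.X ^ k - Polynomial.C 1, ?_, ?_⟩
    · exact Polynomial.monic_X_pow_sub_C 1 hk.ne'
    · simp [Polynomial.eval₂, hroot]
  have hints : IsIntegral ℤ s := hintθ.add (hintθ.pow _)
  set q : ℚ := ((z ^ 2 - 2 : ℤ) : ℚ) / ((z ^ 2 : ℤ) : ℚ) with hq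
  have hz2q : ((z ^ 2 : ℤ) : ℚ) ≠ 0 := Int.cast_ne_zero.mpr (pow_ne_zero _ hz)
  have hsq : s = ((q : ℚ) : ℂ) := by
    rw [hq]
    push_cast
    rw [eq_div_iff (by push_cast at hz2 ⊢; exact hz2)]
    linear_combination key
  have hintq : IsIntegral ℤ q := by
    have : algebraMap ℚ ℂ q = s := by simp [hsq]
    rw [← isIntegral_algebraMap_iff (algebraMap ℚ ℂ).injective]
    rw [this]; exact hints
  obtain ⟨n, hn⟩ := IsIntegrallyClosed.isIntegral_iff.mp hintq
  have hnq : (n : ℚ) * ((z ^ 2 : ℤ) : ℚ) = ((z ^ 2 - 2 : ℤ) : ℚ) := by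
    have : (n : ℚ) = q := hn
    rw [this, hq, div_mul_cancel₀ _ hz2q]
  have hnz : n * z ^ 2 = z ^ 2 - 2 := by exact_mod_cast hnq
  have hdvd : z ^ 2 ∣ 2 := by
    have : z ^ 2 ∣ (z ^ 2 - 2) := ⟨n, by linarith⟩
    exact (dvd_sub_right dvd_rfl).mp this
  have hz1 : z ^ 2 = 1 := by
    have hb1 : z ≤ 2 := by nlinarith [Int.le_of_dvd (by norm_num) hdvd]
    have hb2 : -2 ≤ z := by nlinarith [Int.le_of_dvd (by norm_num) hdvd]
    interval_cases z <;> simp_all <;> omega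
  have : (z : ℂ) ^ 2 = 1 := by exact_mod_cast hz1
  rw [this] at heq
  linear_combination heq
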